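/- Let C, D, E be rigid monoidal categories, let F₁ : C ⥤ D and F₂ : C ⥤ E be (strong) monoidal functors, and let I₁ : D ⥤ C and I₂ : E ⥤ C be left adjoints of F₁ and F₂ respectively. Then for all objects M of D and N of E there is an isomorphism in C: I₁(M) ⊗ I₂(N) ≅ I₂(F₂(I₁(M)) ⊗ N). -/

import Mathlib

open CategoryTheory MonoidalCategory Functor.LaxMonoidal Functor.OplaxMonoidal

section Aux

variable {C D : Type*} [Category C] [Category D] [MonoidalCategory C] [MonoidalCategory D]

/-- A strong monoidal functor sends exact pairings to exact pairings. -/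
noncomputable def mapExactPairing (F : C ⥤ D) [F.Monoidal] (X Y : C) [ExactPairing X Y] :
    ExactPairing (F.obj X) (F.obj Y) where
  coevaluation' := ε F ≫ F.map (η_ X Y) ≫ δ F X Y
  evaluation' := μ F Y X ≫ F.map (ε_ X Y) ≫ η F
  coevaluation_evaluation' := by
    have key : F.obj Y ◁ δ F X Y ≫ (α_ (F.obj Y) (F.obj X) (F.obj Y)).inv ≫ μ F Y X ▷ F.obj Y
        = μ F Y (X ⊗ Y) ≫ F.map (α_ Y X Y).inv ≫ δ F (Y ⊗ X) Y := by
      rw [← cancel_mono (μ F (Y ⊗ X) Y)]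
      rw [Category.assoc, Category.assoc, Category.assoc, ← Functor.LaxMonoidal.associativity_inv,
        ← MonoidalCategory.whiskerLeft_comp_assoc]
      simp
    simp only [MonoidalCategory.whiskerLeft_comp, comp_whiskerRight, Category.assoc]
    slice_lhs 3 5 => rw [key]
    simp only [Category.assoc]
    rw [μ_natural_right_assoc, δ_natural_left_assoc]
    simp only [← Functor.map_comp_assoc]
    simp [ExactPairing.coevaluation_evaluation]
  evaluation_coevaluation' := by
    have key : δ F X Y ▷ F.obj X ≫ (α_ (F.obj X) (F.obj Y) (F.obj X)).hom ≫ F.obj X ◁ μ F Y X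
        = μ F (X ⊗ Y) X ≫ F.map (α_ X Y X).hom ≫ δ F X (Y ⊗ X) := by
      rw [← cancel_mono (μ F X (Y ⊗ X))]
      rw [Category.assoc, Category.assoc, Category.assoc, ← Functor.LaxMonoidal.associativity,
        ← comp_whiskerRight_assoc]
      simp
    simp only [MonoidalCategory.whiskerLeft_comp, comp_whiskerRight, Category.assoc]
    slice_lhs 3 5 => rw [key]
    simp only [Category.assoc]
    rw [μ_natural_left_assoc, δ_natural_right_assoc]
    simp only [← Functor.map_comp_assoc]
    simp [ExactPairing.evaluation_coevaluation]

/-- The projection formula isomorphism. -/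
noncomputable def mainIso
    {C E : Type*} [Category C] [Category E]
    [MonoidalCategory C] [MonoidalCategory E]
    [RigidCategory C] [RigidCategory E]
    (F₂ : C ⥤ E) [F₂.Monoidal]
    (I₂ : E ⥤ C) (adj₂ : I₂ ⊣ F₂)
    (X : C) (N : E) : X ⊗ I₂.obj N ≅ I₂.obj (F₂.obj X ⊗ N) := by
  haveI : ExactPairing (F₂.obj (ᘁX)) (F₂.obj X) := mapExactPairing F₂ (ᘁX) X
  let d : F₂.obj (ᘁX) ≅ ᘁ(F₂.obj X) :=
    leftDualIso (mapExactPairing F₂ (ᘁX) X) (HasLeftDual.exact (Y := F₂.obj X))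
  let natiso : tensorLeft (ᘁX) ⋙ F₂ ≅ F₂ ⋙ tensorLeft (ᘁ(F₂.obj X)) :=
    (Functor.Monoidal.commTensorLeft F₂ (ᘁX)).symm ≪≫
      Functor.isoWhiskerLeft F₂ ((tensoringLeft E).mapIso d)
  let adjL : tensorLeft X ⊣ tensorLeft (ᘁX) := tensorLeftAdjunction (ᘁX) X
  let adjR : tensorLeft (F₂.obj X) ⊣ tensorLeft (ᘁ(F₂.obj X)) :=
    tensorLeftAdjunction (ᘁ(F₂.obj X)) (F₂.obj X)
  let A1 : (I₂ ⋙ tensorLeft X) ⊣ (tensorLeft (ᘁX) ⋙ F₂) := adj₂.comp adjL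
  let A2 : (tensorLeft (F₂.obj X) ⋙ I₂) ⊣ (F₂ ⋙ tensorLeft (ᘁ(F₂.obj X))) := adjR.comp adj₂
  exact ((A1.ofNatIsoRight natiso).leftAdjointUniq A2).app N

end Aux

/-- Let `C, D, E` be rigid monoidal categories, `F₁ : C ⥤ D`, `F₂ : C ⥤ E` strong monoidal
functors with left adjoints `I₁ ⊣ F₁`, `I₂ ⊣ F₂`.  Then for all objects `M` of `D` and `N` of `E`
there is an isomorphism `I₁ M ⊗ I₂ N ≅ I₂ (F₂ (I₁ M) ⊗ N)` in `C`. -/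
theorem ind_tensor_ind_iso
    {C D E : Type*} [Category C] [Category D] [Category E]
    [MonoidalCategory C] [MonoidalCategory D] [MonoidalCategory E]
    [RigidCategory C] [RigidCategory D] [RigidCategory E]
    (F₁ : C ⥤ D) (F₂ : C ⥤ E) [F₁.Monoidal] [F₂.Monoidal]
    (I₁ : D ⥤ C) (I₂ : E ⥤ C) (adj₁ : I₁ ⊣ F₁) (adj₂ : I₂ ⊣ F₂)
    (M : D) (N : E) :
    Nonempty (I₁.obj M ⊗ I₂.obj N ≅ I₂.obj (F₂.obj (I₁.obj M) ⊗ N)) :=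
  ⟨mainIso F₂ I₂ adj₂ (I₁.obj M) N⟩
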